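/- Let ϱ > 0, d > 0 and β ≥ (ϱ + d)/3. Then for all real ξ, ϱ·ξ·coth(ξ) + ξ·coth(d·ξ) − β·ξ² ≤ ϱ + 1/d, where the left-hand side is extended continuously by the value ϱ + 1/d at ξ = 0. Consequently the supremum over ξ ∈ ℝ of ϱ·ξ·coth(ξ) + ξ·coth(d·ξ) − β·ξ² equals ϱ + 1/d. -/

import Mathlib

open Real

/-- Hyperbolic cotangent. -/
noncomputable def coth (x : ℝ) : ℝ := Real.cosh x / Real.sinh x

lemma aux_sinh_le (x : ℝ) (hx : 0 ≤ x) : Real.sinh x ≤ x * Real.cosh x := by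
  have H : MonotoneOn (fun t : ℝ => t * Real.cosh t - Real.sinh t) (Set.Ici 0) := by
    have hder : ∀ t : ℝ, HasDerivAt (fun t : ℝ => t * Real.cosh t - Real.sinh t)
        (t * Real.sinh t) t := by
      intro t
      have h1 : HasDerivAt (fun t : ℝ => t * Real.cosh t - Real.sinh t) _ t :=
        ((hasDerivAt_id t).mul (Real.hasDerivAt_cosh t)).sub (Real.hasDerivAt_sinh t)
      convert h1 using 1; simp [id]
    apply monotoneOn_of_deriv_nonneg (convex_Ici 0)
    · exact (Continuous.sub (continuous_id.mul Real.continuous_cosh) Real.continuous_sinh).continuousOn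
    · exact fun t _ => (hder t).differentiableAt.differentiableWithinAt
    · intro t ht
      rw [(hder t).deriv]
      have ht' : 0 < t := by simpa using ht
      exact mul_nonneg ht'.le (Real.sinh_nonneg_iff.2 ht'.le)
  have := H (Set.self_mem_Ici) (by exact hx) hx
  simpa using this

lemma aux_xcosh_le (x : ℝ) (hx : 0 ≤ x) :
    x * Real.cosh x ≤ (1 + x ^ 2 / 3) * Real.sinh x := by
  have H : MonotoneOn (fun t : ℝ => (1 + t ^ 2 / 3) * Real.sinh t - t * Real.cosh t)
      (Set.Ici 0) := by
    have hder : ∀ t : ℝ, HasDerivAt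
        (fun t : ℝ => (1 + t ^ 2 / 3) * Real.sinh t - t * Real.cosh t)
        (t / 3 * (t * Real.cosh t - Real.sinh t)) t := by
      intro t
      have hpoly : HasDerivAt (fun t : ℝ => 1 + t ^ 2 / 3) (2 * t / 3) t := by
        have := ((hasDerivAt_pow 2 t).div_const 3).const_add 1
        simpa using this
      have h1 : HasDerivAt (fun t : ℝ => (1 + t ^ 2 / 3) * Real.sinh t - t * Real.cosh t) _ t :=
        (hpoly.mul (Real.hasDerivAt_sinh t)).sub
        ((hasDerivAt_id t).mul (Real.hasDerivAt_cosh t))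
      convert h1 using 1; simp [id]; ring
    apply monotoneOn_of_deriv_nonneg (convex_Ici 0)
    · fun_prop
    · exact fun t _ => (hder t).differentiableAt.differentiableWithinAt
    · intro t ht
      rw [(hder t).deriv]
      have ht' : 0 < t := by simpa using ht
      have := aux_sinh_le t ht'.le
      have h3 : 0 ≤ t * Real.cosh t - Real.sinh t := by linarith
      positivity
  have := H (Set.self_mem_Ici) (by exact hx) hx
  simp only [Set.mem_Ici] at this
  have h0 : ((1:ℝ) + 0 ^ 2 / 3) * Real.sinh 0 - 0 * Real.cosh 0 = 0 := by simp
  simp only [h0] at this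
  linarith [this]

lemma aux_coth_bound (x : ℝ) (hx : x ≠ 0) : x * coth x ≤ 1 + x ^ 2 / 3 := by
  rcases lt_or_gt_of_ne hx with h | h
  · have h' : 0 < -x := by linarith
    have hs : 0 < Real.sinh (-x) := Real.sinh_pos_iff.2 h'
    have key := aux_xcosh_le (-x) h'.le
    have : (-x) * (Real.cosh (-x) / Real.sinh (-x)) ≤ 1 + (-x) ^ 2 / 3 := by
      rw [mul_div_assoc'] at *
      exact (div_le_iff₀ hs).2 key
    simp only [Real.cosh_neg, Real.sinh_neg, neg_sq] at this
    unfold coth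
    calc x * (Real.cosh x / Real.sinh x)
        = (-x) * (Real.cosh x / -Real.sinh x) := by ring
      _ ≤ 1 + x ^ 2 / 3 := by
          convert this using 2 <;> ring
  · have hs : 0 < Real.sinh x := Real.sinh_pos_iff.2 h
    have key := aux_xcosh_le x h.le
    unfold coth
    rw [mul_div_assoc']
    exact (div_le_iff₀ hs).2 key

/-- The symbol ϱ·ξ·coth ξ + ξ·coth (d·ξ) − β·ξ², extended by ϱ + 1/d at ξ = 0,
    is bounded above by ϱ + 1/d when β ≥ (ϱ+d)/3, and its supremum is ϱ + 1/d. -/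
theorem stmt2 (ϱ d β : ℝ) (hϱ : 0 < ϱ) (hd : 0 < d) (hβ : (ϱ + d) / 3 ≤ β) :
    (∀ ξ : ℝ,
        (if ξ = 0 then ϱ + 1 / d
          else ϱ * ξ * coth ξ + ξ * coth (d * ξ) - β * ξ ^ 2) ≤ ϱ + 1 / d) ∧
      IsLUB (Set.range fun ξ : ℝ =>
          (if ξ = 0 then ϱ + 1 / d
            else ϱ * ξ * coth ξ + ξ * coth (d * ξ) - β * ξ ^ 2)) (ϱ + 1 / d) := by
  have hub : ∀ ξ : ℝ,
      (if ξ = 0 then ϱ + 1 / d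
        else ϱ * ξ * coth ξ + ξ * coth (d * ξ) - β * ξ ^ 2) ≤ ϱ + 1 / d := by
    intro ξ
    by_cases hξ : ξ = 0
    · simp [hξ]
    · simp only [hξ, if_false]
      have hA := aux_coth_bound ξ hξ
      have hdξ : d * ξ ≠ 0 := mul_ne_zero hd.ne' hξ
      have hB := aux_coth_bound (d * ξ) hdξ
      -- ξ * coth (d ξ) ≤ 1/d + d * ξ^2/3
      have hB' : ξ * coth (d * ξ) ≤ 1 / d + d * ξ ^ 2 / 3 := by
        have := (div_le_div_iff_of_pos_right hd).2 hB
        calc ξ * coth (d * ξ) = (d * ξ * coth (d * ξ)) / d := by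
              field_simp
          _ ≤ (1 + (d * ξ) ^ 2 / 3) / d := by
              gcongr
          _ = 1 / d + d * ξ ^ 2 / 3 := by field_simp
      have hβ' : 0 ≤ (β - (ϱ + d) / 3) * ξ ^ 2 :=
        mul_nonneg (by linarith) (sq_nonneg ξ)
      nlinarith [mul_le_mul_of_nonneg_left hA hϱ.le]
  refine ⟨hub, ?_, ?_⟩
  · rintro x ⟨ξ, rfl⟩
    exact hub ξ
  · intro b hb
    have := hb ⟨0, rfl⟩
    simpa using this
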